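/- If f : I → ℝ is 5-convex (e.g., f ∈ C⁶ with f⁽⁶⁾ ≥ 0) then for all x < y in I: (5/18) f(((5+√15)/10)x + ((5−√15)/10)y) + (4/9) f((x+y)/2) + (5/18) f(((5−√15)/10)x + ((5+√15)/10)y) ≤ (1/(y-x)) ∫ₓʸ f(t) dt ≤ (1/12) f(x) + (5/12) f(((5+√5)/10)x + ((5−√5)/10)y) + (5/12) f(((5−√5)/10)x + ((5+√5)/10)y) + (1/12) f(y). -/

import Mathlib

set_option maxHeartbeats 1600000

open Set MeasureTheory intervalIntegral Function

lemma hard_ineq (w : ℝ) (h0 : 0 ≤ w) (h1 : w ≤ 3873/10000) :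
    5*w^5 ≤ 3*(w+1127/10000)^6 := by
  nlinarith [sq_nonneg w, sq_nonneg (w - 1/4), sq_nonneg (w-3/10), sq_nonneg (w-1/5),
    mul_nonneg h0 h0, pow_nonneg h0 3, pow_nonneg h0 4, pow_nonneg h0 5,
    mul_nonneg (mul_nonneg h0 h0) (sub_nonneg.2 h1), sq_nonneg (w - 7/20),
    mul_nonneg (pow_nonneg h0 4) (sub_nonneg.2 h1),
    mul_nonneg (pow_nonneg h0 3) (sub_nonneg.2 h1)]

lemma hard_ineq' (u a : ℝ) (ha : 1127/10000 ≤ a) (h0 : a ≤ u) (h1 : u - a ≤ 3873/10000) :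
    5*(u-a)^5 ≤ 3*u^6 := by
  have h2 := hard_ineq (u-a) (by linarith) h1
  have h3 : (3:ℝ)*(u - a + 1127/10000)^6 ≤ 3*u^6 := by
    have hb : (0:ℝ) ≤ u - a + 1127/10000 := by linarith
    have : u - a + 1127/10000 ≤ u := by linarith
    have := pow_le_pow_left₀ hb this 6
    linarith
  linarith

lemma gauss_kernel (u : ℝ) (h0 : 0 ≤ u) (h1 : u ≤ 1) :
    0 ≤ (1-u)^6/6 - (5/18*(max ((5-Real.sqrt 15)/10 - u) 0)^5
      + 4/9*(max (1/2 - u) 0)^5 + 5/18*(max ((5+Real.sqrt 15)/10 - u) 0)^5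
      + 0*(max (1 - u) 0)^5) := by
  set s := Real.sqrt 15 with hsdef
  have hs : s^2 = 15 := Real.sq_sqrt (by norm_num)
  have hs0 : 0 ≤ s := Real.sqrt_nonneg _
  have hsl : 3.8729 ≤ s := by nlinarith
  have hsu : s ≤ 3.873 := by nlinarith
  rcases le_or_gt u ((5-s)/10) with hc1 | hc1
  · rw [max_eq_left (by linarith), max_eq_left (by linarith), max_eq_left (by linarith)]
    have hid : (1-u)^6/6 - (5/18*((5-s)/10 - u)^5 + 4/9*(1/2 - u)^5
        + 5/18*((5+s)/10 - u)^5 + 0*(max (1 - u) 0)^5) = u^6/6 := by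
      linear_combination (-13/1440 - 1/7200*s^2 + (11/240 + 1/3600*s^2)*u - 1/12*u^2 + 1/18*u^3) * hs
    rw [hid]; positivity
  · rcases le_or_gt u (1/2) with hc2 | hc2
    · rw [max_eq_right (by linarith), max_eq_left (by linarith), max_eq_left (by linarith)]
      have hid : (1-u)^6/6 - (5/18*(0:ℝ)^5 + 4/9*(1/2 - u)^5
          + 5/18*((5+s)/10 - u)^5 + 0*(max (1 - u) 0)^5)
          = u^6/6 - 5/18*(u - (5-s)/10)^5 := by
        linear_combination (-13/1440 - 1/7200*s^2 + (11/240 + 1/3600*s^2)*u - 1/12*u^2 + 1/18*u^3) * hs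
      rw [hid]
      have key := hard_ineq' u ((5-s)/10) (by linarith) (by linarith) (by linarith)
      linarith
    · rw [max_eq_right (by linarith), max_eq_right (by linarith)]
      rcases le_or_gt u ((5+s)/10) with hc3 | hc3
      · rw [max_eq_left (by linarith)]
        have key := hard_ineq' (1-u) ((5-s)/10) (by linarith) (by linarith) (by linarith)
        have he : ((5+s)/10 - u) = (1-u) - (5-s)/10 := by ring
        rw [he]
        nlinarith [key]
      · rw [max_eq_right (by linarith)]
        have h : (0:ℝ) ≤ (1-u)^6/6 := by positivity
        nlinarith [h]

lemma lobatto_kernel (u : ℝ) (h0 : 0 ≤ u) (h1 : u ≤ 1) :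
    (1-u)^6/6 - (1/12*(max (0 - u) 0)^5 + 5/12*(max ((5-Real.sqrt 5)/10 - u) 0)^5
      + 5/12*(max ((5+Real.sqrt 5)/10 - u) 0)^5 + 1/12*(max (1 - u) 0)^5) ≤ 0 := by
  set s := Real.sqrt 5 with hsdef
  have hs : s^2 = 5 := Real.sq_sqrt (by norm_num)
  have hs0 : 0 ≤ s := Real.sqrt_nonneg _
  have hsl : 2.236 ≤ s := by nlinarith
  have hsu : s ≤ 2.2361 := by nlinarith
  have m0 : max (0 - u) 0 = 0 := max_eq_right (by linarith)
  have m4 : max (1 - u) 0 = 1 - u := max_eq_left (by linarith)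
  rw [m0, m4]
  rcases le_or_gt u ((5-s)/10) with hc1 | hc1
  · rw [max_eq_left (show (0:ℝ) ≤ (5-s)/10 - u by linarith),
      max_eq_left (show (0:ℝ) ≤ (5+s)/10 - u by linarith)]
    have hid : (1-u)^6/6 - (1/12*(0:ℝ)^5 + 5/12*((5-s)/10 - u)^5
        + 5/12*((5+s)/10 - u)^5 + 1/12*(1 - u)^5) = u^6/6 - 1/12*u^5 := by
      linear_combination (-11/960 - 1/4800*s^2 + (31/480 + 1/2400*s^2)*u - 1/8*u^2 + 1/12*u^3) * hs
    rw [hid]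
    nlinarith [mul_nonneg (pow_nonneg h0 5) (by linarith : (0:ℝ) ≤ 1 - 2*u)]
  · rcases le_or_gt u (1/2) with hc2 | hc2
    · rw [max_eq_right (show (5-s)/10 - u ≤ (0:ℝ) by linarith),
        max_eq_left (show (0:ℝ) ≤ (5+s)/10 - u by linarith)]
      have hid : (1-u)^6/6 - (1/12*(0:ℝ)^5 + 5/12*(0:ℝ)^5
          + 5/12*((5+s)/10 - u)^5 + 1/12*(1 - u)^5)
          = u^6/6 - 1/12*u^5 - 5/12*(u - (5-s)/10)^5 := by
        linear_combination (-11/960 - 1/4800*s^2 + (31/480 + 1/2400*s^2)*u - 1/8*u^2 + 1/12*u^3) * hs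
      rw [hid]
      nlinarith [mul_nonneg (pow_nonneg h0 5) (by linarith : (0:ℝ) ≤ 1 - 2*u),
        pow_nonneg (by linarith : (0:ℝ) ≤ u - (5-s)/10) 5]
    · rw [max_eq_right (show (5-s)/10 - u ≤ (0:ℝ) by linarith)]
      rcases le_or_gt u ((5+s)/10) with hc3 | hc3
      · rw [max_eq_left (show (0:ℝ) ≤ (5+s)/10 - u by linarith)]
        nlinarith [mul_nonneg (pow_nonneg (by linarith : (0:ℝ) ≤ 1-u) 5) (by linarith : (0:ℝ) ≤ 2*u - 1),
          pow_nonneg (by linarith : (0:ℝ) ≤ (5+s)/10 - u) 5]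
      · rw [max_eq_right (show (5+s)/10 - u ≤ (0:ℝ) by linarith)]
        nlinarith [mul_nonneg (pow_nonneg (by linarith : (0:ℝ) ≤ 1-u) 5) (by linarith : (0:ℝ) ≤ 2*u - 1)]

lemma mono_deriv (c x z : ℝ) (k : ℕ) :
    HasDerivAt (fun w => c/(k+1) * (w-x)^(k+1)) (c*(z-x)^k) z := by
  have h : HasDerivAt (fun w : ℝ => (w-x)^(k+1)) ((k+1) * (z-x)^k) z := by
    simpa using ((hasDerivAt_id z).sub_const x).fun_pow (k+1)
  have h2 := h.const_mul (c/(k+1))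
  refine h2.congr_deriv ?_
  have : ((k:ℝ)+1) ≠ 0 := by positivity
  field_simp

lemma taylor_rem (f : ℝ → ℝ) (x y : ℝ) (hxy : x < y)
    (hf : ContDiffOn ℝ 6 f (Icc x y)) (z : ℝ) (hz : z ∈ Icc x y) :
    f z = taylorWithinEval f 5 (Icc x y) x z
      + (1/120) * ∫ t in x..z, (z - t)^5 * iteratedDerivWithin 6 f (Icc x y) t := by
  have hUD : UniqueDiffOn ℝ (Icc x y) := uniqueDiffOn_Icc hxy
  have hf5 : ContDiffOn ℝ 5 f (Icc x y) := hf.of_le (by norm_num)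
  have hgc : ContinuousOn (iteratedDerivWithin 6 f (Icc x y)) (Icc x y) :=
    hf.continuousOn_iteratedDerivWithin (le_refl _) hUD
  have hf' : DifferentiableOn ℝ (iteratedDerivWithin 5 f (Icc x y)) (Ioo x y) :=
    (hf.differentiableOn_iteratedDerivWithin (by norm_num) hUD).mono Ioo_subset_Icc_self
  rcases eq_or_lt_of_le hz.1 with rfl | hxz
  · simp
  · have hcont : ContinuousOn (fun t => taylorWithinEval f 5 (Icc x y) t z) (Icc x z) :=
      (continuousOn_taylorWithinEval hUD hf5).mono (Icc_subset_Icc le_rfl hz.2)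
    have hderiv : ∀ t ∈ Ioo x z,
        HasDerivWithinAt (fun t => taylorWithinEval f 5 (Icc x y) t z)
          ((((Nat.factorial 5 : ℕ) : ℝ)⁻¹ * (z - t)^5) • iteratedDerivWithin 6 f (Icc x y) t) (Ioi t) t := by
      intro t ht
      exact (taylorWithinEval_hasDerivAt_Ioo z hxy ⟨ht.1, lt_of_lt_of_le ht.2 hz.2⟩ hf5
        hf').hasDerivWithinAt
    have hint : IntervalIntegrable
        (fun t => (((Nat.factorial 5 : ℕ) : ℝ)⁻¹ * (z - t)^5) • iteratedDerivWithin 6 f (Icc x y) t)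
        volume x z := by
      apply ContinuousOn.intervalIntegrable
      rw [uIcc_of_le hxz.le]
      exact ((continuousOn_const.mul ((continuousOn_const.sub continuousOn_id).pow 5)).smul
        (hgc.mono (Icc_subset_Icc le_rfl hz.2)))
    have := integral_eq_sub_of_hasDeriv_right_of_le hxz.le hcont hderiv hint
    rw [taylorWithinEval_self] at this
    have h2 : ∫ t in x..z, (((Nat.factorial 5 : ℕ) : ℝ)⁻¹ * (z - t)^5) • iteratedDerivWithin 6 f (Icc x y) t
        = (1/120) * ∫ t in x..z, (z - t)^5 * iteratedDerivWithin 6 f (Icc x y) t := by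
      rw [← intervalIntegral.integral_const_mul]
      congr 1; ext t
      simp [Nat.factorial]
      ring
    rw [h2] at this
    linarith [this]

lemma quad_err (f : ℝ → ℝ) (x y : ℝ) (hxy : x < y) (hf : ContDiffOn ℝ 6 f (Icc x y))
    (z₁ z₂ z₃ z₄ W₁ W₂ W₃ W₄ : ℝ)
    (hz1 : z₁ ∈ Icc x y) (hz2 : z₂ ∈ Icc x y) (hz3 : z₃ ∈ Icc x y) (hz4 : z₄ ∈ Icc x y)
    (hm0 : W₁ + W₂ + W₃ + W₄ = (y-x))
    (hm1 : W₁*(z₁-x) + W₂*(z₂-x) + W₃*(z₃-x) + W₄*(z₄-x) = (y-x)^2/2)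
    (hm2 : W₁*(z₁-x)^2 + W₂*(z₂-x)^2 + W₃*(z₃-x)^2 + W₄*(z₄-x)^2 = (y-x)^3/3)
    (hm3 : W₁*(z₁-x)^3 + W₂*(z₂-x)^3 + W₃*(z₃-x)^3 + W₄*(z₄-x)^3 = (y-x)^4/4)
    (hm4 : W₁*(z₁-x)^4 + W₂*(z₂-x)^4 + W₃*(z₃-x)^4 + W₄*(z₄-x)^4 = (y-x)^5/5)
    (hm5 : W₁*(z₁-x)^5 + W₂*(z₂-x)^5 + W₃*(z₃-x)^5 + W₄*(z₄-x)^5 = (y-x)^6/6) :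
    (∫ s in x..y, f s) - (W₁ * f z₁ + W₂ * f z₂ + W₃ * f z₃ + W₄ * f z₄)
      = (1/120) * ∫ t in x..y, ((y-t)^6/6
          - (W₁*(max (z₁-t) 0)^5 + W₂*(max (z₂-t) 0)^5 + W₃*(max (z₃-t) 0)^5
            + W₄*(max (z₄-t) 0)^5))
          * iteratedDerivWithin 6 f (Icc x y) t := by
  have hUD : UniqueDiffOn ℝ (Icc x y) := uniqueDiffOn_Icc hxy
  set g := iteratedDerivWithin 6 f (Icc x y) with hgdef
  have hgc : ContinuousOn g (Icc x y) := hf.continuousOn_iteratedDerivWithin (le_refl _) hUD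
  -- continuous extension of g
  set G : ℝ → ℝ := fun t => g (max x (min t y)) with hGdef
  have hclamp : Continuous fun t : ℝ => max x (min t y) :=
    continuous_const.max (continuous_id.min continuous_const)
  have hG : Continuous G := by
    apply hgc.comp_continuous hclamp
    intro t
    exact ⟨le_max_left _ _, max_le hxy.le (min_le_right _ _)⟩
  have hGg : ∀ t ∈ Icc x y, G t = g t := by
    intro t ht
    simp only [hGdef]
    rw [min_eq_left ht.2, max_eq_right ht.1]
  -- Taylor coefficients
  set A0 := ((Nat.factorial 0 : ℕ) : ℝ)⁻¹ * iteratedDerivWithin 0 f (Icc x y) x with hA0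
  set A1 := ((Nat.factorial 1 : ℕ) : ℝ)⁻¹ * iteratedDerivWithin 1 f (Icc x y) x with hA1
  set A2 := ((Nat.factorial 2 : ℕ) : ℝ)⁻¹ * iteratedDerivWithin 2 f (Icc x y) x with hA2
  set A3 := ((Nat.factorial 3 : ℕ) : ℝ)⁻¹ * iteratedDerivWithin 3 f (Icc x y) x with hA3
  set A4 := ((Nat.factorial 4 : ℕ) : ℝ)⁻¹ * iteratedDerivWithin 4 f (Icc x y) x with hA4
  set A5 := ((Nat.factorial 5 : ℕ) : ℝ)⁻¹ * iteratedDerivWithin 5 f (Icc x y) x with hA5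
  set Pe : ℝ → ℝ := fun z => A0 + A1*(z-x) + A2*(z-x)^2 + A3*(z-x)^3 + A4*(z-x)^4 + A5*(z-x)^5
    with hPedef
  have hPe : ∀ z, taylorWithinEval f 5 (Icc x y) x z = Pe z := by
    intro z
    rw [taylor_within_apply]
    simp only [hPedef, hA0, hA1, hA2, hA3, hA4, hA5, Finset.sum_range_succ,
      Finset.sum_range_zero, smul_eq_mul]
    push_cast
    ring
  have hPeCont : Continuous Pe := by fun_prop
  -- remainder function
  set Rf : ℝ → ℝ := fun z => ∫ t in x..y, (max (z-t) 0)^5 * G t with hRfdef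
  have hphiC : ∀ z : ℝ, Continuous fun t => (max (z-t) 0)^5 * G t := by
    intro z; fun_prop
  have hphiC' : ∀ t : ℝ, Continuous fun z => (max (z-t) 0)^5 * G t := by
    intro t; fun_prop
  have hR : ∀ z ∈ Icc x y, f z = Pe z + (1/120) * Rf z := by
    intro z hz
    have h1 := taylor_rem f x y hxy hf z hz
    rw [hPe] at h1
    have hext : (∫ t in x..z, (z - t)^5 * g t) = Rf z := by
      have i1 : IntervalIntegrable (fun t => (max (z-t) 0)^5 * G t) volume x z :=
        (hphiC z).intervalIntegrable _ _
      have i2 : IntervalIntegrable (fun t => (max (z-t) 0)^5 * G t) volume z y :=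
        (hphiC z).intervalIntegrable _ _
      have e1 : (∫ t in x..z, (max (z-t) 0)^5 * G t) = ∫ t in x..z, (z - t)^5 * g t := by
        apply integral_congr
        intro t ht
        rw [uIcc_of_le hz.1] at ht
        dsimp only
        rw [max_eq_left (by linarith [ht.2] : (0:ℝ) ≤ z - t),
          hGg t ⟨ht.1, le_trans ht.2 hz.2⟩]
      have e2 : (∫ t in z..y, (max (z-t) 0)^5 * G t) = 0 := by
        have : (∫ t in z..y, (max (z-t) 0)^5 * G t) = ∫ t in z..y, (0:ℝ) := by
          apply integral_congr
          intro t ht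
          rw [uIcc_of_le hz.2] at ht
          dsimp only
          rw [max_eq_right (by linarith [ht.1] : z - t ≤ (0:ℝ))]
          norm_num
        rw [this]; simp
      have hrz : Rf z = ∫ t in x..y, (max (z-t) 0)^5 * G t := rfl
      rw [hrz, ← integral_add_adjacent_intervals i1 i2, e1, e2, add_zero]
    rw [hext] at h1
    exact h1
  -- Fubini
  have hfub : (∫ z in x..y, Rf z) = ∫ t in x..y, (y-t)^6/6 * G t := by
    have hunc : Continuous (uncurry fun z t => (max (z-t) 0)^5 * G t) := by
      have : (uncurry fun z t => (max (z-t) 0)^5 * G t)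
          = fun p : ℝ × ℝ => (max (p.1-p.2) 0)^5 * G p.2 := rfl
      rw [this]; fun_prop
    have hintunc : Integrable (uncurry fun z t => (max (z-t) 0)^5 * G t)
        ((volume.restrict (Ioc x y)).prod (volume.restrict (Ioc x y))) := by
      rw [Measure.prod_restrict]
      exact (hunc.continuousOn.integrableOn_compact (isCompact_Icc.prod isCompact_Icc)).mono_set
        (prod_mono Ioc_subset_Icc_self Ioc_subset_Icc_self)
    have h1 : (∫ z in x..y, Rf z)
        = ∫ z, (∫ t, (max (z-t) 0)^5 * G t ∂(volume.restrict (Ioc x y)))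
            ∂(volume.restrict (Ioc x y)) := by
      rw [integral_of_le hxy.le]
      apply setIntegral_congr_fun measurableSet_Ioc
      intro z _
      show (∫ t in x..y, (max (z-t) 0)^5 * G t) = _
      rw [integral_of_le hxy.le]
    rw [h1, integral_integral_swap hintunc, integral_of_le hxy.le]
    apply setIntegral_congr_fun measurableSet_Ioc
    intro t ht
    dsimp only
    have hxt : x ≤ t := ht.1.le
    have hty : t ≤ y := ht.2
    have h2 : (∫ z, (max (z-t) 0)^5 * G t ∂(volume.restrict (Ioc x y)))
        = ∫ z in x..y, (max (z-t) 0)^5 * G t := by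
      rw [integral_of_le hxy.le]
    rw [h2, intervalIntegral.integral_mul_const]
    have i1 : IntervalIntegrable (fun z => (max (z-t) 0)^5) volume x t := by
      apply Continuous.intervalIntegrable; fun_prop
    have i2 : IntervalIntegrable (fun z => (max (z-t) 0)^5) volume t y := by
      apply Continuous.intervalIntegrable; fun_prop
    have e1 : (∫ z in x..t, (max (z-t) 0)^5) = 0 := by
      have : (∫ z in x..t, (max (z-t) 0)^5) = ∫ z in x..t, (0:ℝ) := by
        apply integral_congr
        intro z hz
        rw [uIcc_of_le hxt] at hz
        dsimp only
        rw [max_eq_right (by linarith [hz.2] : z - t ≤ (0:ℝ))]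
        norm_num
      rw [this]; simp
    have e2 : (∫ z in t..y, (max (z-t) 0)^5) = (y-t)^6/6 := by
      have : (∫ z in t..y, (max (z-t) 0)^5) = ∫ z in t..y, (z - t)^5 := by
        apply integral_congr
        intro z hz
        rw [uIcc_of_le hty] at hz
        dsimp only
        rw [max_eq_left (by linarith [hz.1] : (0:ℝ) ≤ z - t)]
      rw [this, integral_comp_sub_right (fun w => w^5) t, sub_self, integral_pow]
      norm_num
    rw [← integral_add_adjacent_intervals i1 i2, e1, e2, zero_add]
  -- integral of the Taylor polynomial matches the quadrature
  have hPquad : (∫ z in x..y, Pe z) = W₁ * Pe z₁ + W₂ * Pe z₂ + W₃ * Pe z₃ + W₄ * Pe z₄ := by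
    have hQ : ∀ z : ℝ, HasDerivAt (fun w =>
        A0/((0:ℕ)+1) * (w-x)^((0:ℕ)+1) + A1/((1:ℕ)+1) * (w-x)^((1:ℕ)+1)
        + A2/((2:ℕ)+1) * (w-x)^((2:ℕ)+1) + A3/((3:ℕ)+1) * (w-x)^((3:ℕ)+1)
        + A4/((4:ℕ)+1) * (w-x)^((4:ℕ)+1) + A5/((5:ℕ)+1) * (w-x)^((5:ℕ)+1)) (Pe z) z := by
      intro z
      have h := ((((((mono_deriv A0 x z 0).add (mono_deriv A1 x z 1)).add
        (mono_deriv A2 x z 2)).add (mono_deriv A3 x z 3)).add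
        (mono_deriv A4 x z 4)).add (mono_deriv A5 x z 5))
      refine h.congr_deriv ?_
      rw [hPedef]
      push_cast
      ring
    rw [integral_eq_sub_of_hasDerivAt (fun z _ => hQ z) (hPeCont.intervalIntegrable _ _)]
    simp only [hPedef]
    push_cast
    linear_combination -A0*hm0 - A1*hm1 - A2*hm2 - A3*hm3 - A4*hm4 - A5*hm5
  -- assemble
  have hfint : IntervalIntegrable f volume x y := by
    apply ContinuousOn.intervalIntegrable
    rw [uIcc_of_le hxy.le]; exact hf.continuousOn
  have hPeint : IntervalIntegrable Pe volume x y := hPeCont.intervalIntegrable _ _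
  have hsub : (∫ s in x..y, f s) - (∫ z in x..y, Pe z) = (1/120) * ∫ z in x..y, Rf z := by
    rw [← integral_sub hfint hPeint]
    have : (∫ z in x..y, (f z - Pe z)) = ∫ z in x..y, (1/120) * Rf z := by
      apply integral_congr
      intro z hz
      rw [uIcc_of_le hxy.le] at hz
      have := hR z hz
      linarith [this]
    rw [this, intervalIntegral.integral_const_mul]
  -- quadrature side
  have hquadR : W₁ * f z₁ + W₂ * f z₂ + W₃ * f z₃ + W₄ * f z₄
      = (W₁ * Pe z₁ + W₂ * Pe z₂ + W₃ * Pe z₃ + W₄ * Pe z₄)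
        + (1/120) * ∫ t in x..y, (W₁*(max (z₁-t) 0)^5 + W₂*(max (z₂-t) 0)^5
            + W₃*(max (z₃-t) 0)^5 + W₄*(max (z₄-t) 0)^5) * G t := by
    have e : (∫ t in x..y, (W₁*(max (z₁-t) 0)^5 + W₂*(max (z₂-t) 0)^5
        + W₃*(max (z₃-t) 0)^5 + W₄*(max (z₄-t) 0)^5) * G t)
        = W₁ * Rf z₁ + W₂ * Rf z₂ + W₃ * Rf z₃ + W₄ * Rf z₄ := by
      have j1 : IntervalIntegrable (fun t => W₁ * ((max (z₁-t) 0)^5 * G t)) volume x y := by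
        apply Continuous.intervalIntegrable; fun_prop
      have j2 : IntervalIntegrable (fun t => W₂ * ((max (z₂-t) 0)^5 * G t)) volume x y := by
        apply Continuous.intervalIntegrable; fun_prop
      have j3 : IntervalIntegrable (fun t => W₃ * ((max (z₃-t) 0)^5 * G t)) volume x y := by
        apply Continuous.intervalIntegrable; fun_prop
      have j4 : IntervalIntegrable (fun t => W₄ * ((max (z₄-t) 0)^5 * G t)) volume x y := by
        apply Continuous.intervalIntegrable; fun_prop
      have : (∫ t in x..y, (W₁*(max (z₁-t) 0)^5 + W₂*(max (z₂-t) 0)^5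
          + W₃*(max (z₃-t) 0)^5 + W₄*(max (z₄-t) 0)^5) * G t)
          = ∫ t in x..y, (W₁ * ((max (z₁-t) 0)^5 * G t) + (W₂ * ((max (z₂-t) 0)^5 * G t)
            + (W₃ * ((max (z₃-t) 0)^5 * G t) + W₄ * ((max (z₄-t) 0)^5 * G t)))) := by
        apply integral_congr; intro t _; ring
      rw [this, integral_add j1 (j2.add (j3.add j4)), integral_add j2 (j3.add j4),
        integral_add j3 j4, intervalIntegral.integral_const_mul,
        intervalIntegral.integral_const_mul, intervalIntegral.integral_const_mul,
        intervalIntegral.integral_const_mul]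
      rw [hRfdef]
      ring
    rw [e]
    have r1 := hR z₁ hz1
    have r2 := hR z₂ hz2
    have r3 := hR z₃ hz3
    have r4 := hR z₄ hz4
    linear_combination W₁*r1 + W₂*r2 + W₃*r3 + W₄*r4
  -- kernel integral split
  have hkerG : (∫ t in x..y, ((y-t)^6/6
      - (W₁*(max (z₁-t) 0)^5 + W₂*(max (z₂-t) 0)^5 + W₃*(max (z₃-t) 0)^5
        + W₄*(max (z₄-t) 0)^5)) * G t)
      = (∫ t in x..y, (y-t)^6/6 * G t)
        - ∫ t in x..y, (W₁*(max (z₁-t) 0)^5 + W₂*(max (z₂-t) 0)^5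
            + W₃*(max (z₃-t) 0)^5 + W₄*(max (z₄-t) 0)^5) * G t := by
    have j1 : IntervalIntegrable (fun t => (y-t)^6/6 * G t) volume x y := by
      apply Continuous.intervalIntegrable; fun_prop
    have j2 : IntervalIntegrable (fun t => (W₁*(max (z₁-t) 0)^5 + W₂*(max (z₂-t) 0)^5
        + W₃*(max (z₃-t) 0)^5 + W₄*(max (z₄-t) 0)^5) * G t) volume x y := by
      apply Continuous.intervalIntegrable; fun_prop
    rw [← integral_sub j1 j2]
    apply integral_congr; intro t _; ring
  have hGtog : (∫ t in x..y, ((y-t)^6/6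
      - (W₁*(max (z₁-t) 0)^5 + W₂*(max (z₂-t) 0)^5 + W₃*(max (z₃-t) 0)^5
        + W₄*(max (z₄-t) 0)^5)) * G t)
      = ∫ t in x..y, ((y-t)^6/6
      - (W₁*(max (z₁-t) 0)^5 + W₂*(max (z₂-t) 0)^5 + W₃*(max (z₃-t) 0)^5
        + W₄*(max (z₄-t) 0)^5)) * g t := by
    apply integral_congr
    intro t ht
    rw [uIcc_of_le hxy.le] at ht
    dsimp only
    rw [hGg t ht]
  rw [← hGtog, hkerG, hquadR, ← hPquad]
  rw [hfub] at hsub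
  linarith [hsub]

theorem gauss3_lobatto4_five_convex (I : Set ℝ) (hI : Convex ℝ I) (f : ℝ → ℝ)
    (hf : ContDiffOn ℝ 6 f I)
    (h6 : ∀ t ∈ I, 0 ≤ iteratedDerivWithin 6 f I t)
    (x y : ℝ) (hx : x ∈ I) (hy : y ∈ I) (hxy : x < y) :
    (5 / 18) * f (((5 + Real.sqrt 15) / 10) * x + ((5 - Real.sqrt 15) / 10) * y) +
      (4 / 9) * f ((x + y) / 2) +
      (5 / 18) * f (((5 - Real.sqrt 15) / 10) * x + ((5 + Real.sqrt 15) / 10) * y) ≤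
      (1 / (y - x)) * (∫ t in x..y, f t) ∧
    (1 / (y - x)) * (∫ t in x..y, f t) ≤
      (1 / 12) * f x + (5 / 12) * f (((5 + Real.sqrt 5) / 10) * x + ((5 - Real.sqrt 5) / 10) * y) +
      (5 / 12) * f (((5 - Real.sqrt 5) / 10) * x + ((5 + Real.sqrt 5) / 10) * y) + (1 / 12) * f y := by
  have hIcc : Icc x y ⊆ I := hI.ordConnected.out hx hy
  have hfI : ContDiffOn ℝ 6 f (Icc x y) := hf.mono hIcc
  have hd : 0 < y - x := sub_pos.2 hxy
  have hgeq : ∀ t ∈ Ioo x y,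
      iteratedDerivWithin 6 f (Icc x y) t = iteratedDerivWithin 6 f I t := by
    intro t ht
    have h1 : Icc x y ∈ nhds t :=
      Filter.mem_of_superset (isOpen_Ioo.mem_nhds ht) Ioo_subset_Icc_self
    rw [iteratedDerivWithin_eq_iteratedFDerivWithin, iteratedDerivWithin_eq_iteratedFDerivWithin]
    congr 1
    rw [← inter_eq_right.mpr hIcc]
    exact (iteratedFDerivWithin_inter h1)
  have hg0 : ∀ t ∈ Ioo x y, 0 ≤ iteratedDerivWithin 6 f (Icc x y) t := by
    intro t ht
    rw [hgeq t ht]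
    exact h6 t (hIcc (Ioo_subset_Icc_self ht))
  constructor
  · -- Gauss lower bound
    set s := Real.sqrt 15 with hsdef
    have hs : s^2 = 15 := Real.sq_sqrt (by norm_num)
    have hs0 : 0 ≤ s := Real.sqrt_nonneg _
    have hsl : 3.8729 ≤ s := by nlinarith
    have hsu : s ≤ 3.873 := by nlinarith
    have hkey := quad_err f x y hxy hfI
      (x + (5-s)/10*(y-x)) (x + (1/2)*(y-x)) (x + (5+s)/10*(y-x)) y
      (5/18*(y-x)) (4/9*(y-x)) (5/18*(y-x)) 0
      (by constructor <;> nlinarith) (by constructor <;> nlinarith)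
      (by constructor <;> nlinarith) (by constructor <;> nlinarith)
      (by ring) (by ring)
      (by linear_combination ((1:ℝ)/180*(y-x)^3) * hs)
      (by linear_combination ((1:ℝ)/120*(y-x)^4) * hs)
      (by linear_combination ((11/1200 + s^2/18000)*(y-x)^5) * hs)
      (by linear_combination ((13/1440 + s^2/7200)*(y-x)^6) * hs)
    have hker : ∀ t ∈ Ioo x y, 0 ≤ ((y-t)^6/6
        - (5/18*(y-x)*(max ((x + (5-s)/10*(y-x))-t) 0)^5
          + 4/9*(y-x)*(max ((x + (1/2)*(y-x))-t) 0)^5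
          + 5/18*(y-x)*(max ((x + (5+s)/10*(y-x))-t) 0)^5
          + 0*(max (y-t) 0)^5)) := by
      intro t ht
      set u := (t-x)/(y-x) with hudef
      have hu0 : 0 ≤ u := div_nonneg (by linarith [ht.1]) hd.le
      have hu1 : u ≤ 1 := by
        rw [hudef, div_le_one hd]; linarith [ht.2]
      have hut : t = x + u*(y-x) := by
        rw [hudef]; field_simp; ring
      have key : ∀ c : ℝ, (x + c*(y-x)) - t = (c - u)*(y-x) := by
        intro c; rw [hut]; ring
      have mgen : ∀ c : ℝ, max ((x + c*(y-x))-t) 0 = (max (c - u) 0) * (y-x) := by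
        intro c
        rcases le_total (c - u) 0 with h|h
        · rw [key c, max_eq_right (mul_nonpos_iff.mpr (Or.inr ⟨h, hd.le⟩)),
            max_eq_right h, zero_mul]
        · rw [key c, max_eq_left (mul_nonneg h hd.le), max_eq_left h]
      have m1 := mgen ((5-s)/10)
      have m2 := mgen ((1/2:ℝ))
      have m3 := mgen ((5+s)/10)
      have m4 : max (y-t) 0 = (max (1 - u) 0) * (y-x) := by
        have : y - t = (x + 1*(y-x)) - t := by ring
        rw [this, mgen 1]
      have hyt : y - t = (1-u)*(y-x) := by rw [hut]; ring
      rw [m1, m2, m3, m4, hyt]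
      have hnorm := gauss_kernel u hu0 hu1
      have hfin : ((1-u)*(y-x))^6/6
          - (5/18*(y-x)*((max ((5-s)/10 - u) 0) * (y-x))^5
            + 4/9*(y-x)*((max (1/2 - u) 0) * (y-x))^5
            + 5/18*(y-x)*((max ((5+s)/10 - u) 0) * (y-x))^5
            + 0*((max (1 - u) 0) * (y-x))^5)
          = (y-x)^6 * ((1-u)^6/6 - (5/18*(max ((5-s)/10 - u) 0)^5
            + 4/9*(max (1/2 - u) 0)^5 + 5/18*(max ((5+s)/10 - u) 0)^5
            + 0*(max (1 - u) 0)^5)) := by ring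
      rw [hfin]
      exact mul_nonneg (pow_nonneg hd.le 6) hnorm
    have hpos : 0 ≤ ∫ t in x..y, ((y-t)^6/6
        - (5/18*(y-x)*(max ((x + (5-s)/10*(y-x))-t) 0)^5
          + 4/9*(y-x)*(max ((x + (1/2)*(y-x))-t) 0)^5
          + 5/18*(y-x)*(max ((x + (5+s)/10*(y-x))-t) 0)^5
          + 0*(max (y-t) 0)^5)) * iteratedDerivWithin 6 f (Icc x y) t := by
      apply intervalIntegral.integral_nonneg_of_ae_restrict hxy.le
      rw [← Measure.restrict_congr_set Ioo_ae_eq_Icc]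
      exact (ae_restrict_iff' measurableSet_Ioo).mpr
        (ae_of_all _ (fun t ht => mul_nonneg (hker t ht) (hg0 t ht)))
    have hQ : 5/18*(y-x) * f (x + (5-s)/10*(y-x)) + 4/9*(y-x) * f (x + (1/2)*(y-x))
        + 5/18*(y-x) * f (x + (5+s)/10*(y-x)) + 0 * f y ≤ ∫ t in x..y, f t := by
      linarith [hkey, hpos]
    have e1 : ((5 + s) / 10) * x + ((5 - s) / 10) * y = x + (5-s)/10*(y-x) := by ring
    have e2 : (x + y)/2 = x + (1/2)*(y-x) := by ring
    have e3 : ((5 - s) / 10) * x + ((5 + s) / 10) * y = x + (5+s)/10*(y-x) := by ring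
    rw [e1, e2, e3,
      show (1:ℝ)/(y-x) * (∫ t in x..y, f t) = (∫ t in x..y, f t)/(y-x) by ring,
      le_div_iff₀ hd]
    linarith [hQ]

  · -- Lobatto upper bound
    set s := Real.sqrt 5 with hsdef
    have hs : s^2 = 5 := Real.sq_sqrt (by norm_num)
    have hs0 : 0 ≤ s := Real.sqrt_nonneg _
    have hsl : 2.236 ≤ s := by nlinarith
    have hsu : s ≤ 2.2361 := by nlinarith
    have hkey := quad_err f x y hxy hfI
      x (x + (5-s)/10*(y-x)) (x + (5+s)/10*(y-x)) y
      (1/12*(y-x)) (5/12*(y-x)) (5/12*(y-x)) (1/12*(y-x))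
      (left_mem_Icc.mpr hxy.le) (by constructor <;> nlinarith)
      (by constructor <;> nlinarith) (right_mem_Icc.mpr hxy.le)
      (by ring) (by ring)
      (by linear_combination ((1:ℝ)/120*(y-x)^3) * hs)
      (by linear_combination ((1:ℝ)/80*(y-x)^4) * hs)
      (by linear_combination ((31/2400 + s^2/12000)*(y-x)^5) * hs)
      (by linear_combination ((11/960 + s^2/4800)*(y-x)^6) * hs)
    have hker : ∀ t ∈ Ioo x y, ((y-t)^6/6
        - (1/12*(y-x)*(max (x-t) 0)^5
          + 5/12*(y-x)*(max ((x + (5-s)/10*(y-x))-t) 0)^5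
          + 5/12*(y-x)*(max ((x + (5+s)/10*(y-x))-t) 0)^5
          + 1/12*(y-x)*(max (y-t) 0)^5)) ≤ 0 := by
      intro t ht
      set u := (t-x)/(y-x) with hudef
      have hu0 : 0 ≤ u := div_nonneg (by linarith [ht.1]) hd.le
      have hu1 : u ≤ 1 := by
        rw [hudef, div_le_one hd]; linarith [ht.2]
      have hut : t = x + u*(y-x) := by
        rw [hudef]; field_simp; ring
      have key : ∀ c : ℝ, (x + c*(y-x)) - t = (c - u)*(y-x) := by
        intro c; rw [hut]; ring
      have mgen : ∀ c : ℝ, max ((x + c*(y-x))-t) 0 = (max (c - u) 0) * (y-x) := by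
        intro c
        rcases le_total (c - u) 0 with h|h
        · rw [key c, max_eq_right (mul_nonpos_iff.mpr (Or.inr ⟨h, hd.le⟩)),
            max_eq_right h, zero_mul]
        · rw [key c, max_eq_left (mul_nonneg h hd.le), max_eq_left h]
      have m1 : max (x-t) 0 = (max (0 - u) 0) * (y-x) := by
        have e : x - t = (x + 0*(y-x)) - t := by ring
        rw [e, mgen 0]
      have m2 := mgen ((5-s)/10)
      have m3 := mgen ((5+s)/10)
      have m4 : max (y-t) 0 = (max (1 - u) 0) * (y-x) := by
        have e : y - t = (x + 1*(y-x)) - t := by ring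
        rw [e, mgen 1]
      have hyt : y - t = (1-u)*(y-x) := by rw [hut]; ring
      rw [m1, m2, m3, m4, hyt]
      have hnorm := lobatto_kernel u hu0 hu1
      have hfin : ((1-u)*(y-x))^6/6
          - (1/12*(y-x)*((max (0 - u) 0) * (y-x))^5
            + 5/12*(y-x)*((max ((5-s)/10 - u) 0) * (y-x))^5
            + 5/12*(y-x)*((max ((5+s)/10 - u) 0) * (y-x))^5
            + 1/12*(y-x)*((max (1 - u) 0) * (y-x))^5)
          = (y-x)^6 * ((1-u)^6/6 - (1/12*(max (0 - u) 0)^5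
            + 5/12*(max ((5-s)/10 - u) 0)^5 + 5/12*(max ((5+s)/10 - u) 0)^5
            + 1/12*(max (1 - u) 0)^5)) := by ring
      rw [hfin]
      exact mul_nonpos_iff.mpr (Or.inl ⟨pow_nonneg hd.le 6, hnorm⟩)
    have hneg : (∫ t in x..y, ((y-t)^6/6
        - (1/12*(y-x)*(max (x-t) 0)^5
          + 5/12*(y-x)*(max ((x + (5-s)/10*(y-x))-t) 0)^5
          + 5/12*(y-x)*(max ((x + (5+s)/10*(y-x))-t) 0)^5
          + 1/12*(y-x)*(max (y-t) 0)^5)) * iteratedDerivWithin 6 f (Icc x y) t) ≤ 0 := by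
      have hnn : 0 ≤ ∫ t in x..y, -(((y-t)^6/6
          - (1/12*(y-x)*(max (x-t) 0)^5
            + 5/12*(y-x)*(max ((x + (5-s)/10*(y-x))-t) 0)^5
            + 5/12*(y-x)*(max ((x + (5+s)/10*(y-x))-t) 0)^5
            + 1/12*(y-x)*(max (y-t) 0)^5)) * iteratedDerivWithin 6 f (Icc x y) t) := by
        apply intervalIntegral.integral_nonneg_of_ae_restrict hxy.le
        rw [← Measure.restrict_congr_set Ioo_ae_eq_Icc]
        exact (ae_restrict_iff' measurableSet_Ioo).mpr
          (ae_of_all _ (fun t ht => neg_nonneg.mpr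
            (mul_nonpos_iff.mpr (Or.inr ⟨hker t ht, hg0 t ht⟩))))
      rw [intervalIntegral.integral_neg] at hnn
      linarith [hnn]
    have hQ : (∫ t in x..y, f t) ≤ 1/12*(y-x) * f x + 5/12*(y-x) * f (x + (5-s)/10*(y-x))
        + 5/12*(y-x) * f (x + (5+s)/10*(y-x)) + 1/12*(y-x) * f y := by
      linarith [hkey, hneg]
    have e1 : ((5 + s) / 10) * x + ((5 - s) / 10) * y = x + (5-s)/10*(y-x) := by ring
    have e2 : ((5 - s) / 10) * x + ((5 + s) / 10) * y = x + (5+s)/10*(y-x) := by ring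
    rw [e1, e2,
      show (1:ℝ)/(y-x) * (∫ t in x..y, f t) = (∫ t in x..y, f t)/(y-x) by ring,
      div_le_iff₀ hd]
    linarith [hQ]
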